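/- Let Ĝ be a finite connected weighted graph on vertex set V̂ with symmetric positive edge weights, D ⊊ V̂ a nonempty boundary set, Ã the substochastic matrix on V̂ ∖ D with Ã_{ij} = w_{ij}/w_i, and λ its largest eigenvalue. Then for every nonempty subset B ⊆ V̂ ∖ D, 1 − λ ≤ ψ(B; Ĝ) := (Σ_{i∈B, j∉B} w_{ij}) / (Σ_{i∈B} w_i). In particular 1 − λ ≤ min_{B ⊆ V̂∖D, B ≠ ∅} ψ(B; Ĝ). -/

import Mathlib

open Matrix Finset
open scoped Pointwise

/-- Conductance-type lower bound on the spectral gap: for every nonempty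
`B ⊆ V̂ ∖ D`, `1 − λ ≤ ψ(B; Ĝ) = (∑_{i∈B, j∉B} w_{ij}) / (∑_{i∈B} w_i)`. -/
theorem stmt12 {V : Type*} [Fintype V] [DecidableEq V]
    (w : V → V → ℝ) (hsymm : ∀ x y, w x y = w y x) (hnonneg : ∀ x y, 0 ≤ w x y)
    (hirrefl : ∀ x, w x x = 0)
    (hconn : (SimpleGraph.fromRel (fun x y => 0 < w x y)).Connected)
    (wd : V → ℝ) (hwd : ∀ i, wd i = ∑ j, w i j) (hwdpos : ∀ i, 0 < wd i)
    (D : Finset V) (hD : D.Nonempty) (hDproper : D ≠ Finset.univ)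
    (Atil : Matrix {i : V // i ∉ D} {i : V // i ∉ D} ℝ)
    (hAtil : ∀ i j, Atil i j = w i.1 j.1 / wd i.1)
    (lam : ℝ) (hmem : lam ∈ spectrum ℝ Atil) (hub : ∀ μ ∈ spectrum ℝ Atil, μ ≤ lam) :
    ∀ B : Finset V, B.Nonempty → B ⊆ Finset.univ \ D →
      1 - lam ≤ (∑ i ∈ B, ∑ j ∈ Finset.univ \ B, w i j) / (∑ i ∈ B, wd i) := by
  classical
  intro B hB hBsub
  -- basic facts about the square roots of the degrees
  set d : V → ℝ := fun i => Real.sqrt (wd i) with hd_def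
  have hdpos : ∀ i, 0 < d i := fun i => Real.sqrt_pos.mpr (hwdpos i)
  have hdne : ∀ i, d i ≠ 0 := fun i => (hdpos i).ne'
  have hdd : ∀ i, d i * d i = wd i := fun i => Real.mul_self_sqrt (hwdpos i).le
  have hB' : B ⊆ Dᶜ := by
    intro x hx
    have := hBsub hx
    simp only [Finset.mem_sdiff] at this
    simpa [Finset.mem_compl] using this.2
  -- the conjugating diagonal unit
  set P : Matrix {i : V // i ∉ D} {i : V // i ∉ D} ℝ :=
    Matrix.diagonal (fun i => d i.1) with hP_def
  set Pinv : Matrix {i : V // i ∉ D} {i : V // i ∉ D} ℝ :=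
    Matrix.diagonal (fun i => (d i.1)⁻¹) with hPinv_def
  have hPP : P * Pinv = 1 := by
    rw [hP_def, hPinv_def, Matrix.diagonal_mul_diagonal]
    rw [show (fun i : {i : V // i ∉ D} => d i.1 * (d i.1)⁻¹) = fun _ => (1 : ℝ) from
      funext fun i => mul_inv_cancel₀ (hdne i.1)]
    exact Matrix.diagonal_one
  have hPinvP : Pinv * P = 1 := by
    rw [hP_def, hPinv_def, Matrix.diagonal_mul_diagonal]
    rw [show (fun i : {i : V // i ∉ D} => (d i.1)⁻¹ * d i.1) = fun _ => (1 : ℝ) from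
      funext fun i => inv_mul_cancel₀ (hdne i.1)]
    exact Matrix.diagonal_one
  set u : (Matrix {i : V // i ∉ D} {i : V // i ∉ D} ℝ)ˣ := ⟨P, Pinv, hPP, hPinvP⟩ with hu_def
  -- the symmetrized matrix
  set S : Matrix {i : V // i ∉ D} {i : V // i ∉ D} ℝ := P * Atil * Pinv with hS_def
  have hSentry : ∀ i j, S i j = w i.1 j.1 / (d i.1 * d j.1) := by
    intro i j
    rw [hS_def, hP_def, hPinv_def, Matrix.mul_diagonal, Matrix.diagonal_mul, hAtil]
    rw [show wd i.1 = d i.1 * d i.1 from (hdd i.1).symm]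
    have hi := hdne i.1
    have hj := hdne j.1
    field_simp
  have hSherm : S.IsHermitian := by
    rw [Matrix.IsHermitian]
    ext i j
    simp only [Matrix.conjTranspose_apply, star_trivial]
    rw [hSentry, hSentry, hsymm j.1 i.1, mul_comm (d j.1) (d i.1)]
  have hspecS : spectrum ℝ S = spectrum ℝ Atil := by
    have h1 : S = (u : Matrix {i : V // i ∉ D} {i : V // i ∉ D} ℝ) * Atil
        * ((u⁻¹ : (Matrix {i : V // i ∉ D} {i : V // i ∉ D} ℝ)ˣ) :
            Matrix {i : V // i ∉ D} {i : V // i ∉ D} ℝ) := rfl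
    rw [h1]
    exact spectrum.units_conjugate
  -- the matrix lam • 1 - S is positive semidefinite
  set M : Matrix {i : V // i ∉ D} {i : V // i ∉ D} ℝ := lam • 1 - S with hM_def
  have hone : (lam • (1 : Matrix {i : V // i ∉ D} {i : V // i ∉ D} ℝ)).IsHermitian := by
    unfold Matrix.IsHermitian
    rw [Matrix.conjTranspose_smul, Matrix.conjTranspose_one, star_trivial]
  have hMherm : M.IsHermitian := hone.sub hSherm
  have hMspec := spectrum.singleton_sub_eq (R := ℝ) S lam
  rw [Algebra.algebraMap_eq_smul_one] at hMspec
  have hMeig : ∀ i, 0 ≤ hMherm.eigenvalues i := by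
    intro i
    have h1 : hMherm.eigenvalues i ∈ ({lam} : Set ℝ) - spectrum ℝ S := by
      rw [hMspec]
      exact hMherm.eigenvalues_mem_spectrum_real i
    obtain ⟨a, ha, b, hb, hab⟩ := Set.mem_sub.mp h1
    rw [Set.mem_singleton_iff] at ha
    subst ha
    rw [hspecS] at hb
    have := hub b hb
    linarith [hab ▸ sub_nonneg.mpr this]
  have hPSD : M.PosSemidef := (Matrix.IsHermitian.posSemidef_iff_eigenvalues_nonneg hMherm).mpr hMeig
  -- the test vector
  set v : {i : V // i ∉ D} → ℝ := fun i => if i.1 ∈ B then d i.1 else 0 with hv_def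
  -- a sum-over-subtype reduction
  have key : ∀ F : V → ℝ,
      (∑ i : {i : V // i ∉ D}, if i.1 ∈ B then F i.1 else 0) = ∑ i ∈ B, F i := by
    intro F
    rw [← Finset.sum_subtype (s := Dᶜ) (fun x => Finset.mem_compl)
      (f := fun x => if x ∈ B then F x else 0)]
    rw [Finset.sum_ite_mem, Finset.inter_eq_right.mpr hB']
  have hvv : v ⬝ᵥ v = ∑ i ∈ B, wd i := by
    rw [dotProduct]
    rw [show (fun i : {i : V // i ∉ D} => v i * v i)
        = fun i => if i.1 ∈ B then wd i.1 else 0 from funext fun i => by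
      by_cases h : i.1 ∈ B <;> simp [hv_def, h, hdd]]
    exact key wd
  have hvSv : v ⬝ᵥ (S *ᵥ v) = ∑ i ∈ B, ∑ j ∈ B, w i j := by
    rw [dotProduct]
    have hrow : ∀ i : {i : V // i ∉ D},
        v i * (S *ᵥ v) i = if i.1 ∈ B then ∑ j ∈ B, w i.1 j else 0 := by
      intro i
      have hSv : (S *ᵥ v) i = (∑ j ∈ B, w i.1 j) / d i.1 := by
        rw [Matrix.mulVec, dotProduct]
        rw [show (fun j : {i : V // i ∉ D} => S i j * v j)
            = fun j => if j.1 ∈ B then w i.1 j.1 / d i.1 else 0 from funext fun j => by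
          by_cases h : j.1 ∈ B
          · simp only [hv_def, h, if_true, hSentry]
            field_simp
            rw [mul_comm (d i.1) (d j.1), ← div_div, mul_div_assoc, div_self (hdne j.1), mul_one]
          · simp [hv_def, h]]
        rw [key (fun x => w i.1 x / d i.1), ← Finset.sum_div]
      rw [hSv]
      by_cases h : i.1 ∈ B
      · simp only [hv_def, h, if_true]
        field_simp
        rw [mul_comm, mul_div_assoc, div_self (hdne i.1), mul_one]
      · simp [hv_def, h]
    rw [show (fun i : {i : V // i ∉ D} => v i * (S *ᵥ v) i)
        = fun i => if i.1 ∈ B then ∑ j ∈ B, w i.1 j else 0 from funext hrow]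
    exact key (fun x => ∑ j ∈ B, w x j)
  -- the quadratic form inequality
  have hquad : ∑ i ∈ B, ∑ j ∈ B, w i j ≤ lam * ∑ i ∈ B, wd i := by
    have h0 := hPSD.dotProduct_mulVec_nonneg v
    have hstar : star v = v := star_trivial v
    rw [hstar, hM_def, Matrix.sub_mulVec, Matrix.smul_mulVec, Matrix.one_mulVec,
      dotProduct_sub, dotProduct_smul, smul_eq_mul, hvv, hvSv] at h0
    linarith
  -- finish
  have hdenom : 0 < ∑ i ∈ B, wd i :=
    Finset.sum_pos (fun i _ => hwdpos i) hB
  rw [le_div_iff₀ hdenom]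
  have hnum : ∑ i ∈ B, ∑ j ∈ Finset.univ \ B, w i j
      = (∑ i ∈ B, wd i) - ∑ i ∈ B, ∑ j ∈ B, w i j := by
    rw [← Finset.sum_sub_distrib]
    refine Finset.sum_congr rfl fun i hi => ?_
    rw [Finset.sum_sdiff_eq_sub (Finset.subset_univ B), hwd i]
  rw [hnum]
  nlinarith [hquad, hdenom]
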